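/- Every set of polyominoes all of whose members have size 5 or larger is a loser in the weak (1,2)-achievement game. -/

import Mathlib

/-- A cell of the rectangular board. -/
abbrev Cell : Type := ℤ × ℤ

/-- Two cells are adjacent if they differ by (±1,0) or (0,±1). -/
def Adjacent (a b : Cell) : Prop :=
  (a.1 - b.1).natAbs + (a.2 - b.2).natAbs = 1

/-- A polyomino is a nonempty subset of ℤ² connected through adjacent cells. -/
def IsPolyomino (P : Set Cell) : Prop :=
  P.Nonempty ∧ ∀ a ∈ P, ∀ b ∈ P,
    Relation.ReflTransGen (fun x y => x ∈ P ∧ y ∈ P ∧ Adjacent x y) a b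

/-- Symmetries of the board: compositions of an integer translation with one of the
eight signed/swap linear maps (rotations by multiples of 90° and reflections). -/
def IsSym (f : Cell → Cell) : Prop :=
  ∃ (t : Cell) (a b s : Bool), ∀ p : Cell,
    f p = (t.1 + (if a then (if s then p.2 else p.1) else -(if s then p.2 else p.1)),
           t.2 + (if b then (if s then p.1 else p.2) else -(if s then p.1 else p.2)))

/-- Two subsets of ℤ² are congruent if one is the image of the other under a symmetry. -/
def PolyCongruent (A B : Set Cell) : Prop := ∃ f, IsSym f ∧ f '' A = B

/-- `Ancestor P Q` (written P ⊑ Q): `Q` contains a subset congruent to `P`. -/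
def Ancestor (P Q : Set Cell) : Prop := ∃ S, S ⊆ Q ∧ PolyCongruent P S

/-- `Simpler S T` (written S ⪯ T): every member of `T` has an ancestor in `S`. -/
def Simpler (S T : Set (Set Cell)) : Prop := ∀ Q ∈ T, ∃ P ∈ S, Ancestor P Q

/-- A team: a set of polyominoes no member of which is an ancestor of another member. -/
def IsTeam (F : Set (Set Cell)) : Prop :=
  (∀ P ∈ F, IsPolyomino P) ∧ ∀ P ∈ F, ∀ Q ∈ F, P ≠ Q → ¬ Ancestor P Q

/-- The cells marked so far, given the list of the maker's moves and
the list of the breaker's (pairs of) moves. -/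
def markedCells (ms : List Cell) (bs : List (Cell × Cell)) : Set Cell :=
  {c | c ∈ ms ∨ ∃ p ∈ bs, c = p.1 ∨ c = p.2}

/-- Maker strategy: from the maker's past moves and the breaker's past moves,
produce the maker's next mark. -/
abbrev MStrategy := List Cell → List (Cell × Cell) → Cell

/-- Breaker strategy: from the maker's moves so far (including his latest one) and the
breaker's past moves, produce the breaker's next two marks. -/
abbrev BStrategy := List Cell → List (Cell × Cell) → Cell × Cell

/-- A legal maker strategy always marks a previously unmarked cell. -/
def MLegal (σ : MStrategy) : Prop := ∀ ms bs, σ ms bs ∉ markedCells ms bs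

/-- A legal breaker strategy always marks two distinct previously unmarked cells. -/
def BLegal (τ : BStrategy) : Prop :=
  ∀ ms bs, (τ ms bs).1 ≠ (τ ms bs).2 ∧
    (τ ms bs).1 ∉ markedCells ms bs ∧ (τ ms bs).2 ∉ markedCells ms bs

/-- The lists of moves after `n` full rounds of the weak (1,2)-achievement game,
the maker moving first in each round. -/
def play (σ : MStrategy) (τ : BStrategy) : ℕ → List Cell × List (Cell × Cell)
  | 0 => ([], [])
  | n + 1 =>
      let p := play σ τ n
      let mv := σ p.1 p.2
      (p.1 ++ [mv], p.2 ++ [τ (p.1 ++ [mv]) p.2])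

/-- The set of cells marked by the maker during the first `n` rounds. -/
def makerSet (σ : MStrategy) (τ : BStrategy) (n : ℕ) : Set Cell :=
  {c | c ∈ (play σ τ n).1}

/-- The maker achieves `F` in the play of `σ` against `τ`: at some finite stage his
marked cells contain a subset congruent to a member of `F`. -/
def Achieves (F : Set (Set Cell)) (σ : MStrategy) (τ : BStrategy) : Prop :=
  ∃ n, ∃ Q ∈ F, Ancestor Q (makerSet σ τ n)

/-- A (bounded) set of polyominoes is a winner of the weak (1,2)-achievement game if the
maker has a legal strategy achieving it against every legal breaker strategy. -/
def GameWinner (F : Set (Set Cell)) : Prop :=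
  ∃ σ, MLegal σ ∧ ∀ τ, BLegal τ → Achieves F σ τ

/-- A set of polyominoes is bounded if all its members are finite. -/
def Bounded (F : Set (Set Cell)) : Prop := ∀ P ∈ F, P.Finite

/-- `G` is a bounded restriction of `T`: `G = {F_P : P ∈ T}` for a choice of a finite
polyomino ancestor `F_P ⊑ P` for each `P ∈ T`. -/
def BoundedRestriction (T G : Set (Set Cell)) : Prop :=
  ∃ f : Set Cell → Set Cell,
    (∀ P ∈ T, (f P).Finite ∧ IsPolyomino (f P) ∧ Ancestor (f P) P) ∧ G = f '' T

/-- Winner for a possibly unbounded set of polyominoes: a bounded set is a winner if the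
maker can achieve it; an unbounded set is a winner if every bounded restriction is. -/
def Winner (F : Set (Set Cell)) : Prop :=
  (Bounded F ∧ GameWinner F) ∨
  (¬ Bounded F ∧ ∀ G, BoundedRestriction F G → GameWinner G)

/-- The skinny polyomino `S_n`: `n` cells in a horizontal row. -/
def Srow (n : ℕ) : Set Cell := {p | 0 ≤ p.1 ∧ p.1 < (n : ℤ) ∧ p.2 = 0}

/-- The one-way infinite skinny polyomino `S_∞`. -/
def Sinf : Set Cell := {p | 0 ≤ p.1 ∧ p.2 = 0}

/-- The L-tromino `L_2`. -/
def L2 : Set Cell := {(0, 0), (1, 0), (1, 1)}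

/-- The L-tetromino `L_3`. -/
def L3 : Set Cell := {(0, 0), (1, 0), (2, 0), (2, 1)}

/-- The T-tetromino `T_2`. -/
def T2 : Set Cell := {(0, 0), (1, 0), (2, 0), (1, 1)}

/-- The 2×2 square tetromino `C_2`. -/
def C2 : Set Cell := {(0, 0), (1, 0), (0, 1), (1, 1)}

/-- The S-tetromino `Z_2`. -/
def Z2 : Set Cell := {(0, 0), (1, 0), (1, 1), (2, 1)}

/-- `C_n`: a horizontal row of `n` cells plus the cells above its two end cells. -/
def Cpoly (n : ℕ) : Set Cell :=
  {p | 0 ≤ p.1 ∧ p.1 < (n : ℤ) ∧ p.2 = 0} ∪ {(0, 1), ((n : ℤ) - 1, 1)}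

/-- `Z_n`: a horizontal row of `n` cells plus the cell above one end cell and the cell
below the other end cell. -/
def Zpoly (n : ℕ) : Set Cell :=
  {p | 0 ≤ p.1 ∧ p.1 < (n : ℤ) ∧ p.2 = 0} ∪ {(0, 1), ((n : ℤ) - 1, -1)}

/-- A polyomino is skinny if all its cells lie in one row or one column. -/
def Skinny (P : Set Cell) : Prop :=
  (∃ r, ∀ p ∈ P, p.2 = r) ∨ (∃ c, ∀ p ∈ P, p.1 = c)

/-- A 2-paving: an irreflexive symmetric relation on cells in which every cell is
related to at most two other cells. -/
def TwoPaving (R : Cell → Cell → Prop) : Prop :=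
  (∀ a, ¬ R a a) ∧ (∀ a b, R a b → R b a) ∧
  ∀ a, ∃ b c, ∀ d, R a d → d = b ∨ d = c

/-- The paving strategy based on `R`: a legal breaker strategy that marks every currently
unmarked cell related by `R` to the maker's last move. -/
def PavingStrategy (R : Cell → Cell → Prop) (τ : BStrategy) : Prop :=
  BLegal τ ∧ ∀ ms bs, ∀ last ∈ ms.getLast?, ∀ c, R last c →
    c ∉ markedCells ms bs → (c = (τ ms bs).1 ∨ c = (τ ms bs).2)

/-- `Q` is killed by `R`: every subset of ℤ² congruent to `Q` contains two related cells. -/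
def Killed (R : Cell → Cell → Prop) (Q : Set Cell) : Prop :=
  ∀ S : Set Cell, PolyCongruent Q S → ∃ a ∈ S, ∃ b ∈ S, R a b

/-- The unbounded team `W = {S_∞, T_2} ∪ {C_n : n ≥ 2} ∪ {Z_n : n ≥ 2}`. -/
def Wteam : Set (Set Cell) :=
  {Sinf, T2} ∪ {P | ∃ n, 2 ≤ n ∧ P = Cpoly n} ∪ {P | ∃ n, 2 ≤ n ∧ P = Zpoly n}


/-! ### Auxiliary material for the proof of statement 12 -/

namespace Stmt12Aux

/-- The pairing relation: two adjacent cells lying in the same 2×2 block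
(with blocks anchored at even coordinates, identified via `x + x % 2`). -/
def Rrel (a b : Cell) : Prop :=
  Adjacent a b ∧ a.1 + a.1 % 2 = b.1 + b.1 % 2 ∧ a.2 + a.2 % 2 = b.2 + b.2 % 2

lemma adj_symm {a b : Cell} (h : Adjacent a b) : Adjacent b a := by
  unfold Adjacent at *; omega

lemma Rrel_symm {a b : Cell} (h : Rrel a b) : Rrel b a :=
  ⟨adj_symm h.1, h.2.1.symm, h.2.2.symm⟩

lemma Rrel_irrefl (a : Cell) : ¬ Rrel a a := by
  rintro ⟨h, -⟩; unfold Adjacent at h; omega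

lemma Rrel_cases {a d : Cell} (h : Rrel a d) :
    d = (a.1 + 2 * (a.1 % 2) - 1, a.2) ∨ d = (a.1, a.2 + 2 * (a.2 % 2) - 1) := by
  obtain ⟨hadj, h1, h2⟩ := h
  unfold Adjacent at hadj
  simp only [Prod.ext_iff]
  omega

lemma step_inv {a b : Cell} (hadj : Adjacent a b) (hnr : ¬ Rrel a b) :
    a.1 - a.1 % 2 = b.1 - b.1 % 2 ∧ a.2 - a.2 % 2 = b.2 - b.2 % 2 := by
  have h : ¬ (a.1 + a.1 % 2 = b.1 + b.1 % 2 ∧ a.2 + a.2 % 2 = b.2 + b.2 % 2) :=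
    fun hh => hnr ⟨hadj, hh.1, hh.2⟩
  unfold Adjacent at hadj
  omega

/-- A connected `Rrel`-independent set fits in a 2×2 box, so has at most 4 cells. -/
lemma indep_small {S : Set Cell} (hpoly : IsPolyomino S)
    (hind : ∀ a ∈ S, ∀ b ∈ S, ¬ Rrel a b) : S.encard ≤ 4 := by
  obtain ⟨⟨a, ha⟩, hconn⟩ := hpoly
  have key : ∀ b : Cell,
      Relation.ReflTransGen (fun x y => x ∈ S ∧ y ∈ S ∧ Adjacent x y) a b →
      b.1 - b.1 % 2 = a.1 - a.1 % 2 ∧ b.2 - b.2 % 2 = a.2 - a.2 % 2 := by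
    intro b h
    induction h with
    | refl => exact ⟨rfl, rfl⟩
    | tail h1 h2 ih =>
      obtain ⟨hc, hb', hadj⟩ := h2
      have h3 := step_inv hadj (hind _ hc _ hb')
      exact ⟨by omega, by omega⟩
  set m := a.1 - a.1 % 2 with hm
  set n := a.2 - a.2 % 2 with hn
  have hsub : S ⊆ {(m, n), (m + 1, n), (m, n + 1), (m + 1, n + 1)} := by
    intro b hb
    have hb2 := key b (hconn a ha b hb)
    simp only [Set.mem_insert_iff, Set.mem_singleton_iff, Prod.ext_iff]
    omega
  refine le_trans (Set.encard_mono hsub) ?_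
  refine le_trans (Set.encard_insert_le _ _) ?_
  refine le_trans (add_le_add_left (Set.encard_insert_le _ _) 1) ?_
  refine le_trans (add_le_add_left (add_le_add_left (Set.encard_insert_le _ _) 1) 1) ?_
  rw [Set.encard_singleton]
  norm_num

lemma sym_inj {f : Cell → Cell} (hf : IsSym f) : Function.Injective f := by
  obtain ⟨t, a, b, s, hf⟩ := hf
  intro p q hpq
  rw [hf p, hf q] at hpq
  rcases a <;> rcases b <;> rcases s <;>
    simp only [Bool.false_eq_true, if_true, if_false, Prod.ext_iff] at hpq ⊢ <;> omega

lemma sym_adj {f : Cell → Cell} (hf : IsSym f) (p q : Cell) :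
    Adjacent (f p) (f q) ↔ Adjacent p q := by
  obtain ⟨t, a, b, s, hf⟩ := hf
  rw [hf p, hf q]
  unfold Adjacent
  rcases a <;> rcases b <;> rcases s <;> simp <;> omega

lemma congr_encard {Q S : Set Cell} (h : PolyCongruent Q S) : S.encard = Q.encard := by
  obtain ⟨f, hf, rfl⟩ := h
  exact (sym_inj hf).encard_image Q

lemma congr_poly {Q S : Set Cell} (h : PolyCongruent Q S) (hq : IsPolyomino Q) :
    IsPolyomino S := by
  obtain ⟨f, hf, rfl⟩ := h
  refine ⟨hq.1.image f, ?_⟩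
  rintro x ⟨p, hp, rfl⟩ y ⟨q, hq', rfl⟩
  refine Relation.ReflTransGen.lift f ?_ _ _ (hq.2 p hp q hq')
  rintro u v ⟨hu, hv, hadj⟩
  exact ⟨Set.mem_image_of_mem f hu, Set.mem_image_of_mem f hv, (sym_adj hf u v).2 hadj⟩

lemma congruent_self (A : Set Cell) : PolyCongruent A A := by
  refine ⟨id, ⟨(0, 0), true, true, false, fun p => ?_⟩, Set.image_id A⟩
  simp

lemma ancestor_of_subset {T P : Set Cell} (h : T ⊆ P) : Ancestor T P :=
  ⟨T, h, congruent_self T⟩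

lemma marked_finite (ms : List Cell) (bs : List (Cell × Cell)) :
    (markedCells ms bs).Finite := by
  apply Set.Finite.subset ((ms ++ bs.map Prod.fst ++ bs.map Prod.snd).finite_toSet)
  intro c hc
  simp only [markedCells, Set.mem_setOf_eq] at hc
  simp only [List.mem_append, List.mem_map]
  rcases hc with h | ⟨p, hp, h | h⟩
  · exact Or.inl (Or.inl h)
  · exact Or.inl (Or.inr ⟨p, hp, h.symm⟩)
  · exact Or.inr ⟨p, hp, h.symm⟩

lemma exists_fresh (A : Set Cell) (hA : A.Finite) : ∃ c, c ∉ A := by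
  obtain ⟨c, hc⟩ := hA.infinite_compl.nonempty
  exact ⟨c, hc⟩

lemma breaker_exists (ms : List Cell) (bs : List (Cell × Cell)) :
    ∃ pr : Cell × Cell, pr.1 ≠ pr.2 ∧ pr.1 ∉ markedCells ms bs ∧
      pr.2 ∉ markedCells ms bs ∧
      ∀ last ∈ ms.getLast?, ∀ c, Rrel last c →
        c ∉ markedCells ms bs → (c = pr.1 ∨ c = pr.2) := by
  classical
  have hfin := marked_finite ms bs
  cases hlast : ms.getLast? with
  | none =>
    obtain ⟨c1, hc1⟩ := exists_fresh _ hfin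
    obtain ⟨c2, hc2⟩ := exists_fresh _ (hfin.insert c1)
    have hne : c1 ≠ c2 := fun h => hc2 (h ▸ Set.mem_insert c1 _)
    refine ⟨(c1, c2), hne, hc1, fun h => hc2 (Set.mem_insert_of_mem _ h), ?_⟩
    intro last hl; simp at hl
  | some a =>
    set u : Cell := (a.1 + 2 * (a.1 % 2) - 1, a.2) with hu
    set v : Cell := (a.1, a.2 + 2 * (a.2 % 2) - 1) with hv
    have huv : u ≠ v := by
      simp only [hu, hv, ne_eq, Prod.mk.injEq, not_and]
      intro h; omega
    have hlastmem : ∀ last : Cell, last ∈ (some a : Option Cell) → last = a :=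
      fun l hl => (Option.mem_some_iff.mp hl).symm
    by_cases hum : u ∈ markedCells ms bs <;> by_cases hvm : v ∈ markedCells ms bs
    · obtain ⟨c1, hc1⟩ := exists_fresh _ hfin
      obtain ⟨c2, hc2⟩ := exists_fresh _ (hfin.insert c1)
      have hne : c1 ≠ c2 := fun h => hc2 (h ▸ Set.mem_insert c1 _)
      refine ⟨(c1, c2), hne, hc1, fun h => hc2 (Set.mem_insert_of_mem _ h), ?_⟩
      intro last hl c hc hcm
      rw [hlastmem last hl] at hc
      rcases Rrel_cases hc with rfl | rfl
      · exact absurd hum hcm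
      · exact absurd hvm hcm
    · obtain ⟨c1, hc1⟩ := exists_fresh _ (hfin.insert v)
      have hne : c1 ≠ v := fun h => hc1 (by rw [h]; exact Set.mem_insert v _)
      refine ⟨(c1, v), hne, fun h => hc1 (Set.mem_insert_of_mem _ h), hvm, ?_⟩
      intro last hl c hc hcm
      rw [hlastmem last hl] at hc
      rcases Rrel_cases hc with rfl | rfl
      · exact absurd hum hcm
      · exact Or.inr rfl
    · obtain ⟨c1, hc1⟩ := exists_fresh _ (hfin.insert u)
      have hne : u ≠ c1 := fun h => hc1 (by rw [← h]; exact Set.mem_insert u _)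
      refine ⟨(u, c1), hne, hum, fun h => hc1 (Set.mem_insert_of_mem _ h), ?_⟩
      intro last hl c hc hcm
      rw [hlastmem last hl] at hc
      rcases Rrel_cases hc with rfl | rfl
      · exact Or.inl rfl
      · exact absurd hvm hcm
    · refine ⟨(u, v), huv, hum, hvm, ?_⟩
      intro last hl c hc hcm
      rw [hlastmem last hl] at hc
      rcases Rrel_cases hc with rfl | rfl
      · exact Or.inl rfl
      · exact Or.inr rfl

/-- The breaker's paving strategy. -/
noncomputable def tau : BStrategy := fun ms bs => (breaker_exists ms bs).choose

lemma tau_legal : BLegal tau := by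
  intro ms bs
  obtain ⟨h1, h2, h3, -⟩ := (breaker_exists ms bs).choose_spec
  exact ⟨h1, h2, h3⟩

lemma tau_paving (ms : List Cell) (bs : List (Cell × Cell)) :
    ∀ last ∈ ms.getLast?, ∀ c, Rrel last c →
      c ∉ markedCells ms bs → (c = (tau ms bs).1 ∨ c = (tau ms bs).2) :=
  (breaker_exists ms bs).choose_spec.2.2.2

lemma marked_mono_maker (ms : List Cell) (bs : List (Cell × Cell)) (m : Cell) :
    markedCells ms bs ⊆ markedCells (ms ++ [m]) bs := by
  intro c hc
  simp only [markedCells, Set.mem_setOf_eq, List.mem_append, List.mem_singleton] at hc ⊢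
  aesop

lemma marked_mono_breaker (ms : List Cell) (bs : List (Cell × Cell)) (p : Cell × Cell) :
    markedCells ms bs ⊆ markedCells ms (bs ++ [p]) := by
  intro c hc
  simp only [markedCells, Set.mem_setOf_eq, List.mem_append, List.mem_singleton] at hc ⊢
  aesop

lemma maker_in_marked {ms : List Cell} {bs : List (Cell × Cell)} {c : Cell}
    (h : c ∈ ms) : c ∈ markedCells ms bs := Or.inl h

lemma neighbors_marked (σ : MStrategy) (n : ℕ) :
    ∀ p ∈ (play σ tau n).1, ∀ d, Rrel p d →
      d ∈ markedCells (play σ tau n).1 (play σ tau n).2 := by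
  induction n with
  | zero =>
    intro p hp
    simp [play] at hp
  | succ n ih =>
    intro p hp d hd
    set M := (play σ tau n).1 with hM
    set B := (play σ tau n).2 with hB
    set mv := σ M B with hmv
    have hplay : play σ tau (n + 1) = (M ++ [mv], B ++ [tau (M ++ [mv]) B]) := rfl
    rw [hplay] at hp ⊢
    rcases List.mem_append.mp hp with h | h
    · exact marked_mono_breaker _ _ _ (marked_mono_maker _ _ _ (ih p h d hd))
    · have hp' : p = mv := by simpa using h
      rw [hp'] at hd
      by_cases hm : d ∈ markedCells (M ++ [mv]) B
      · exact marked_mono_breaker _ _ _ hm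
      · have hlast : mv ∈ (M ++ [mv]).getLast? := by
          rw [List.getLast?_concat]; rfl
        rcases tau_paving (M ++ [mv]) B mv hlast d hd hm with h' | h' <;>
          exact Or.inr ⟨tau (M ++ [mv]) B, by simp, by tauto⟩

lemma maker_indep (σ : MStrategy) (hσ : MLegal σ) (n : ℕ) :
    ∀ a ∈ (play σ tau n).1, ∀ b ∈ (play σ tau n).1, ¬ Rrel a b := by
  induction n with
  | zero =>
    intro a ha
    simp [play] at ha
  | succ n ih =>
    intro a ha b hb hR
    set M := (play σ tau n).1 with hM
    set B := (play σ tau n).2 with hB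
    set mv := σ M B with hmv
    have hplay : play σ tau (n + 1) = (M ++ [mv], B ++ [tau (M ++ [mv]) B]) := rfl
    rw [hplay] at ha hb
    have hmv_un : mv ∉ markedCells M B := hσ M B
    rcases List.mem_append.mp ha with ha' | ha' <;> rcases List.mem_append.mp hb with hb' | hb'
    · exact ih a ha' b hb' hR
    · have hbm : b = mv := by simpa using hb'
      rw [hbm] at hR
      exact hmv_un (neighbors_marked σ n a ha' mv hR)
    · have ham : a = mv := by simpa using ha'
      rw [ham] at hR
      exact hmv_un (neighbors_marked σ n b hb' mv (Rrel_symm hR))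
    · have h1 : a = mv := by simpa using ha'
      have h2 : b = mv := by simpa using hb'
      rw [h1, h2] at hR
      exact Rrel_irrefl mv hR

/-- Main lemma: no family of polyominoes of size ≥ 5 is a game winner. -/
lemma main_loser (F : Set (Set Cell)) (hpoly : ∀ P ∈ F, IsPolyomino P)
    (h5 : ∀ P ∈ F, 5 ≤ P.encard) : ¬ GameWinner F := by
  rintro ⟨σ, hσ, hwin⟩
  obtain ⟨n, Q, hQ, S, hSsub, hcong⟩ := hwin tau tau_legal
  have hSpoly := congr_poly hcong (hpoly Q hQ)
  have hSen : (5 : ℕ∞) ≤ S.encard := (congr_encard hcong).symm ▸ h5 Q hQ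
  have hind : ∀ a ∈ S, ∀ b ∈ S, ¬ Rrel a b := fun a ha b hb =>
    maker_indep σ hσ n a (hSsub ha) b (hSsub hb)
  have hsmall := indep_small hSpoly hind
  have : (5 : ℕ∞) ≤ 4 := le_trans hSen hsmall
  norm_num at this

lemma exit {P T : Set Cell} (hT : T ⊆ P) {a b : Cell} (ha : a ∈ T)
    (hpath : Relation.ReflTransGen (fun x y => x ∈ P ∧ y ∈ P ∧ Adjacent x y) a b)
    (hb : b ∉ T) :
    ∃ x ∈ T, ∃ y ∈ P, y ∉ T ∧ Adjacent x y := by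
  induction hpath with
  | refl => exact absurd ha hb
  | tail h1 h2 ih =>
    obtain ⟨hcP, hbP, hadj⟩ := h2
    rename_i c b'
    by_cases hcT : c ∈ T
    · exact ⟨c, hcT, b', hbP, hb, hadj⟩
    · exact ih hcT

lemma grow {P : Set Cell} (hP : IsPolyomino P) : ∀ k : ℕ, 1 ≤ k → (k : ℕ∞) ≤ P.encard →
    ∃ T, T ⊆ P ∧ T.Finite ∧ IsPolyomino T ∧ T.encard = k := by
  intro k
  induction k with
  | zero => omega
  | succ k ih =>
    intro _ hk
    by_cases hk1 : k = 0
    · subst hk1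
      obtain ⟨a, ha⟩ := hP.1
      refine ⟨{a}, Set.singleton_subset_iff.mpr ha, Set.finite_singleton a,
        ⟨⟨a, rfl⟩, ?_⟩, by simp⟩
      intro x hx y hy
      simp only [Set.mem_singleton_iff] at hx hy
      subst hx; subst hy
      exact Relation.ReflTransGen.refl
    · obtain ⟨T, hTP, hTfin, hTpoly, hTcard⟩ := ih (by omega)
        (le_trans (by exact_mod_cast Nat.le_succ k) hk)
      have hne : ¬ P ⊆ T := by
        intro h
        have h1 := Set.encard_mono h
        rw [hTcard] at h1
        have h2 := le_trans hk h1
        have h3 : (k : ℕ∞) < (k + 1 : ℕ) := by exact_mod_cast Nat.lt_succ_self k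
        exact absurd h2 (not_le.mpr h3)
      obtain ⟨b, hbP, hbT⟩ := Set.not_subset.mp hne
      obtain ⟨a, haT⟩ := hTpoly.1
      have hpath := hP.2 a (hTP haT) b hbP
      obtain ⟨x, hxT, y, hyP, hyT, hxy⟩ := exit hTP haT hpath hbT
      have hmono : ∀ u v : Cell, (u ∈ T ∧ v ∈ T ∧ Adjacent u v) →
          (u ∈ insert y T ∧ v ∈ insert y T ∧ Adjacent u v) :=
        fun u v ⟨h1, h2, h3⟩ => ⟨Set.mem_insert_of_mem _ h1, Set.mem_insert_of_mem _ h2, h3⟩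
      have hTT : ∀ u ∈ T, ∀ v ∈ T, Relation.ReflTransGen
          (fun s t : Cell => s ∈ insert y T ∧ t ∈ insert y T ∧ Adjacent s t) u v :=
        fun u hu v hv => Relation.ReflTransGen.mono hmono _ _ (hTpoly.2 u hu v hv)
      have hxy' : Relation.ReflTransGen
          (fun s t : Cell => s ∈ insert y T ∧ t ∈ insert y T ∧ Adjacent s t) x y :=
        Relation.ReflTransGen.single
          ⟨Set.mem_insert_of_mem _ hxT, Set.mem_insert y T, hxy⟩
      have hyx' : Relation.ReflTransGen
          (fun s t : Cell => s ∈ insert y T ∧ t ∈ insert y T ∧ Adjacent s t) y x :=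
        Relation.ReflTransGen.single
          ⟨Set.mem_insert y T, Set.mem_insert_of_mem _ hxT, adj_symm hxy⟩
      refine ⟨insert y T, Set.insert_subset hyP hTP, hTfin.insert y,
        ⟨⟨y, Set.mem_insert y T⟩, ?_⟩, ?_⟩
      · intro s hs t ht
        rcases Set.mem_insert_iff.mp hs with rfl | hsT <;>
          rcases Set.mem_insert_iff.mp ht with rfl | htT
        · exact Relation.ReflTransGen.refl
        · exact hyx'.trans (hTT x hxT t htT)
        · exact (hTT s hsT x hxT).trans hxy'
        · exact hTT s hsT t htT
      · rw [Set.encard_insert_of_notMem hyT, hTcard]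
        exact_mod_cast rfl

end Stmt12Aux

/-- every set of polyominoes all of whose members have size 5 or larger is
a loser. -/

theorem stmt12 (F : Set (Set Cell)) (hpoly : ∀ P ∈ F, IsPolyomino P)
    (h5 : ∀ P ∈ F, 5 ≤ P.encard) : ¬ Winner F := by
  intro hW
  rcases hW with ⟨-, hgw⟩ | ⟨-, hall⟩
  · exact Stmt12Aux.main_loser F hpoly h5 hgw
  · classical
    have hex : ∀ P ∈ F, ∃ T, T ⊆ P ∧ T.Finite ∧ IsPolyomino T ∧ T.encard = (5 : ℕ) :=
      fun P hP => Stmt12Aux.grow (hpoly P hP) 5 (by norm_num)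
        (by exact_mod_cast h5 P hP)
    choose! f hsub hfin hfpoly hfcard using hex
    have hres : BoundedRestriction F (f '' F) :=
      ⟨f, fun P hP => ⟨hfin P hP, hfpoly P hP,
        Stmt12Aux.ancestor_of_subset (hsub P hP)⟩, rfl⟩
    refine Stmt12Aux.main_loser (f '' F) ?_ ?_ (hall (f '' F) hres)
    · rintro Q ⟨P, hP, rfl⟩; exact hfpoly P hP
    · rintro Q ⟨P, hP, rfl⟩
      rw [hfcard P hP]
      norm_num
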